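/- In the convex homogeneous setup, for every x ∈ E the number f x is the least upper bound (IsLUB) of the set { ⟪x, q⟫ | q ∈ E, sSup { ⟪p, q⟫ | p ∈ N } = 1 }. (Corollary 3.3: the homogeneous Legendre transform is an involution, L(Lf) = f, where Lf(q) = sup_{p∈N} ⟨p,q⟩ for the 1-homogeneous function f with strictly convex compact level set N = f⁻¹(1).) -/

import Mathlib

open scoped RealInnerProductSpace

section Aux
variable {E : Type*} [NormedAddCommGroup E] [InnerProductSpace ℝ E] [CompleteSpace E]

private lemma hli_deriv_nonpos_of_le {g : ℝ → ℝ} {c : ℝ} (hg : HasDerivAt g c 0)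
    (h : ∀ t ∈ Set.Ioc (0:ℝ) 1, g t ≤ g 0) : c ≤ 0 := by
  have h1 := hasDerivAt_iff_tendsto_slope.mp hg
  have h2 : Filter.Tendsto (slope g 0) (nhdsWithin 0 (Set.Ioi 0)) (nhds c) :=
    h1.mono_left (nhdsWithin_mono _ (fun t ht => ne_of_gt ht))
  refine le_of_tendsto h2 ?_
  filter_upwards [Ioo_mem_nhdsGT_of_mem (by constructor <;> norm_num : (0:ℝ) ∈ Set.Ico 0 1)]
    with t ht
  have ht0 : (0:ℝ) < t := ht.1
  have hle := h t ⟨ht0, le_of_lt ht.2⟩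
  rw [slope_def_field]
  simp only [sub_zero]
  exact div_nonpos_of_nonpos_of_nonneg (by linarith) ht0.le

private lemma hli_euler {f : E → ℝ} {g p : E}
    (hgrad : HasGradientAt f g p) (hom : ∀ t : ℝ, 0 < t → f (t • p) = t * f p) :
    ⟪g, p⟫ = f p := by
  have hline : HasDerivAt (fun t : ℝ => t • p) p 1 := by
    simpa using (hasDerivAt_id (1:ℝ)).smul_const p
  have h1 : HasDerivAt (fun t : ℝ => f (t • p)) ⟪g, p⟫ 1 := by
    have hg' : HasFDerivAt f ((InnerProductSpace.toDual ℝ E) g) ((1:ℝ) • p) := by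
      simpa using hgrad.hasFDerivAt
    have := hg'.comp_hasDerivAt (x := (1:ℝ)) hline
    simp at this; exact this
  have h2 : HasDerivAt (fun t : ℝ => t * f p) (f p) 1 := by
    simpa using (hasDerivAt_id (1:ℝ)).mul_const (f p)
  have heq : (fun t : ℝ => f (t • p)) =ᶠ[nhds 1] (fun t : ℝ => t * f p) := by
    filter_upwards [eventually_gt_nhds (zero_lt_one)] with t ht
    exact hom t ht
  exact h1.unique (h2.congr_of_eventuallyEq heq)

private lemma hli_normal {f : E → ℝ} {g p p' : E}
    (hgrad : HasGradientAt f g p)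
    (hK : Convex ℝ {x : E | f x ≤ 1}) (hp : f p = 1) (hp' : f p' ≤ 1) :
    ⟪g, p'⟫ ≤ ⟪g, p⟫ := by
  have hline : HasDerivAt (fun t : ℝ => p + t • (p' - p)) (p' - p) 0 := by
    simpa using ((hasDerivAt_id (0:ℝ)).smul_const (p' - p)).const_add p
  have h1 : HasDerivAt (fun t : ℝ => f (p + t • (p' - p))) ⟪g, p' - p⟫ 0 := by
    have hg' : HasFDerivAt f ((InnerProductSpace.toDual ℝ E) g) (p + (0:ℝ) • (p' - p)) := by
      simpa using hgrad.hasFDerivAt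
    have := hg'.comp_hasDerivAt (x := (0:ℝ)) hline
    simp at this; exact this
  have hval : ∀ t ∈ Set.Ioc (0:ℝ) 1,
      (fun t : ℝ => f (p + t • (p' - p))) t ≤ (fun t : ℝ => f (p + t • (p' - p))) 0 := by
    intro t ht
    have hmem : (1 - t) • p + t • p' ∈ {x : E | f x ≤ 1} :=
      hK (by simpa using hp.le) hp' (by linarith [ht.2]) ht.1.le (by ring)
    have hrw : p + t • (p' - p) = (1 - t) • p + t • p' := by module
    simp only [hrw]
    simpa [hp] using hmem
  have hd := hli_deriv_nonpos_of_le h1 hval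
  have : ⟪g, p'⟫ - ⟪g, p⟫ ≤ 0 := by rwa [← inner_sub_right]
  linarith
end Aux

/-- **Corollary 3.3 (involutivity of the homogeneous Legendre transform), `L(Lf) = f`.**
In the convex homogeneous setup, for every `x` the value `f x` is the least upper bound of
`{ ⟨x, q⟩ | Lf(q) = 1 }`, where `Lf(q) = sup_{p ∈ N} ⟨p, q⟩` and `N = f⁻¹(1)`. -/
theorem homogeneous_legendre_involution (d : ℕ) (hd : 1 ≤ d)
    (f : EuclideanSpace ℝ (Fin d) → ℝ)
    (gradf : EuclideanSpace ℝ (Fin d) → EuclideanSpace ℝ (Fin d))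
    (hf_cont : Continuous f)
    (hf_hom : ∀ t : ℝ, 0 < t → ∀ x, f (t • x) = t * f x)
    (hf_pos : ∀ x : EuclideanSpace ℝ (Fin d), x ≠ 0 → 0 < f x)
    (hf_grad : ∀ x : EuclideanSpace ℝ (Fin d), x ≠ 0 → HasGradientAt f (gradf x) x)
    (hgrad_cont : ContinuousOn gradf {x : EuclideanSpace ℝ (Fin d) | x ≠ 0})
    (hconv : StrictConvex ℝ {x : EuclideanSpace ℝ (Fin d) | f x ≤ 1})
    (x : EuclideanSpace ℝ (Fin d)) :
    IsLUB {r : ℝ | ∃ q : EuclideanSpace ℝ (Fin d),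
        sSup {s : ℝ | ∃ p, f p = 1 ∧ s = ⟪p, q⟫} = 1 ∧ r = ⟪x, q⟫}
      (f x) := by
  -- f 0 = 0
  have f0 : f 0 = 0 := by
    have := hf_hom 2 (by norm_num) 0
    rw [smul_zero] at this; linarith
  -- a unit vector
  obtain ⟨v, hvnorm⟩ : ∃ v : EuclideanSpace ℝ (Fin d), ‖v‖ = 1 := by
    refine ⟨EuclideanSpace.single (⟨0, hd⟩ : Fin d) (1:ℝ), ?_⟩
    simp [EuclideanSpace.norm_single]
  -- positive lower bound of f on the unit sphere
  obtain ⟨z, hz, hzmin⟩ := (isCompact_sphere (0:EuclideanSpace ℝ (Fin d)) 1).exists_isMinOn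
    ⟨v, by simpa using hvnorm⟩ hf_cont.continuousOn
  rw [isMinOn_iff] at hzmin
  have hznorm : ‖z‖ = 1 := by simpa using hz
  have hz0 : z ≠ 0 := by intro h; rw [h] at hznorm; simp at hznorm
  have hmpos : 0 < f z := hf_pos z hz0
  -- N is bounded: f p = 1 → ‖p‖ ≤ (f z)⁻¹
  have hNbound : ∀ p : EuclideanSpace ℝ (Fin d), f p = 1 → ‖p‖ ≤ (f z)⁻¹ := by
    intro p hp
    have hp0 : p ≠ 0 := by intro h; rw [h, f0] at hp; norm_num at hp
    have hpn : (0:ℝ) < ‖p‖ := norm_pos_iff.mpr hp0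
    have hu : ‖(‖p‖⁻¹ • p)‖ = 1 := by
      rw [norm_smul]; simp [abs_of_pos (inv_pos.mpr hpn), inv_mul_cancel₀ hpn.ne']
    have h1 : f z ≤ f (‖p‖⁻¹ • p) := hzmin _ (by simpa using hu)
    have h2 : f (‖p‖⁻¹ • p) = ‖p‖⁻¹ * f p := hf_hom _ (inv_pos.mpr hpn) p
    rw [h2, hp, mul_one] at h1
    rw [le_inv_comm₀ hmpos hpn] at h1  -- maybe wrong name
    exact h1
  -- boundedness of the inner-product sets
  have hbdd : ∀ q : EuclideanSpace ℝ (Fin d),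
      BddAbove {s : ℝ | ∃ p, f p = 1 ∧ s = ⟪p, q⟫} := by
    intro q
    refine ⟨(f z)⁻¹ * ‖q‖, ?_⟩
    rintro s ⟨p, hp, rfl⟩
    calc ⟪p, q⟫ ≤ ‖p‖ * ‖q‖ := real_inner_le_norm p q
      _ ≤ (f z)⁻¹ * ‖q‖ := mul_le_mul_of_nonneg_right (hNbound p hp) (norm_nonneg q)
  -- points on N with their gradients give Lf = 1
  have hkey : ∀ p : EuclideanSpace ℝ (Fin d), f p = 1 →
      sSup {s : ℝ | ∃ p', f p' = 1 ∧ s = ⟪p', gradf p⟫} = 1 ∧ ⟪p, gradf p⟫ = 1 := by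
    intro p hp
    have hp0 : p ≠ 0 := by intro h; rw [h, f0] at hp; norm_num at hp
    have heuler : ⟪gradf p, p⟫ = 1 := by
      rw [hli_euler (hf_grad p hp0) (fun t ht => hf_hom t ht p), hp]
    have hpg : ⟪p, gradf p⟫ = 1 := by rw [real_inner_comm]; exact heuler
    constructor
    · refine IsGreatest.csSup_eq ⟨⟨p, hp, hpg.symm⟩, ?_⟩
      rintro s ⟨p', hp', rfl⟩
      calc ⟪p', gradf p⟫ = ⟪gradf p, p'⟫ := real_inner_comm _ _
        _ ≤ ⟪gradf p, p⟫ := hli_normal (hf_grad p hp0) hconv.convex hp hp'.le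
        _ = 1 := heuler
    · exact hpg
  have hmemS : f x ∈ {r : ℝ | ∃ q : EuclideanSpace ℝ (Fin d),
      sSup {s : ℝ | ∃ p, f p = 1 ∧ s = ⟪p, q⟫} = 1 ∧ r = ⟪x, q⟫} := by
    by_cases hx : x = 0
    · subst hx
      have hfv := hf_pos v (by intro h; rw [h] at hvnorm; simp at hvnorm)
      have hp1 : f ((f v)⁻¹ • v) = 1 := by
        rw [hf_hom _ (inv_pos.mpr hfv) v, inv_mul_cancel₀ hfv.ne']
      exact ⟨gradf ((f v)⁻¹ • v), (hkey _ hp1).1, by simp [f0]⟩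
    · have hfx := hf_pos x hx
      have hp1 : f ((f x)⁻¹ • x) = 1 := by
        rw [hf_hom _ (inv_pos.mpr hfx) x, inv_mul_cancel₀ hfx.ne']
      obtain ⟨hsup, hpg⟩ := hkey _ hp1
      refine ⟨gradf ((f x)⁻¹ • x), hsup, ?_⟩
      have h5 : ⟪(f x)⁻¹ • x, gradf ((f x)⁻¹ • x)⟫
          = (f x)⁻¹ * ⟪x, gradf ((f x)⁻¹ • x)⟫ := real_inner_smul_left _ _ _
      rw [h5, inv_mul_eq_one₀ hfx.ne'] at hpg
      exact hpg
  have hub : f x ∈ upperBounds {r : ℝ | ∃ q : EuclideanSpace ℝ (Fin d),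
      sSup {s : ℝ | ∃ p, f p = 1 ∧ s = ⟪p, q⟫} = 1 ∧ r = ⟪x, q⟫} := by
    rintro r ⟨q, hsup, rfl⟩
    by_cases hx : x = 0
    · subst hx
      simp only [inner_zero_left]
      have := hf_pos v (by intro h; rw [h] at hvnorm; simp at hvnorm)
      rw [f0]
    · have hfx := hf_pos x hx
      have hp1 : f ((f x)⁻¹ • x) = 1 := by
        rw [hf_hom _ (inv_pos.mpr hfx) x, inv_mul_cancel₀ hfx.ne']
      have hmem : ⟪(f x)⁻¹ • x, q⟫ ∈ {s : ℝ | ∃ p, f p = 1 ∧ s = ⟪p, q⟫} :=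
        ⟨_, hp1, rfl⟩
      have hle : ⟪(f x)⁻¹ • x, q⟫ ≤ 1 := hsup ▸ le_csSup (hbdd q) hmem
      rw [real_inner_smul_left] at hle
      calc ⟪x, q⟫ = f x * ((f x)⁻¹ * ⟪x, q⟫) := by field_simp
        _ ≤ f x * 1 := mul_le_mul_of_nonneg_left hle hfx.le
        _ = f x := mul_one _
  exact ⟨hub, fun b hb => hb hmemS⟩
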